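/- Let f : ℝⁿ → ℝ be differentiable with L-Lipschitz-continuous gradient (L > 0), ψ : ℝⁿ → ℝ ∪ {+∞} convex, proper, and closed, F = f + ψ, and let H be a symmetric matrix with dᵀHd ≥ σ‖d‖² for all d, σ > 0. Suppose d satisfies Q(d) ≤ (1 − η)Q* for some η ∈ [0,1), and let γ ∈ (0,1). Then for every α with 0 < α ≤ min{1, 2(1 − γ)σ/(L(1 + √η))}, the Armijo condition F(x + αd) ≤ F(x) + αγΔ holds; in particular, backtracking with factor β ∈ (0,1) starting from α = 1 terminates with a step size α ≥ min{1, 2β(1 − γ)σ/(L(1 + √η))}. -/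

import Mathlib

/-
Setting: minimize F = f + ψ over ℝⁿ (modeled as `EuclideanSpace ℝ (Fin n)`), where
f : ℝⁿ → ℝ is smooth and ψ : ℝⁿ → ℝ ∪ {+∞} (modeled as `EReal`-valued, never ⊥)
is convex, proper and closed.  The quadratic model at x with symmetric operator H is
Q(d) = ⟪∇f(x), d⟫ + (1/2)⟪H d, d⟫ + ψ(x+d) − ψ(x), and Δ(d) = ⟪∇f(x), d⟫ + ψ(x+d) − ψ(x).
-/

open scoped RealInnerProductSpace
open Set Filter Topology

noncomputable section

/-- Convexity for extended-real-valued functions (values in ℝ ∪ {±∞}). -/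
def ConvexE {n : ℕ} (g : EuclideanSpace ℝ (Fin n) → EReal) : Prop :=
  ∀ x y : EuclideanSpace ℝ (Fin n), ∀ a b : ℝ, 0 ≤ a → 0 ≤ b → a + b = 1 →
    g (a • x + b • y) ≤ (a : EReal) * g x + (b : EReal) * g y

/-- ψ is proper: it never takes the value −∞ (its values lie in ℝ ∪ {+∞})
and it is finite somewhere. -/
def ProperPsi {n : ℕ} (ψ : EuclideanSpace ℝ (Fin n) → EReal) : Prop :=
  (∀ x, ψ x ≠ ⊥) ∧ ∃ x, ψ x ≠ ⊤

/-- ψ is closed, i.e. lower semicontinuous. -/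
def ClosedPsi {n : ℕ} (ψ : EuclideanSpace ℝ (Fin n) → EReal) : Prop :=
  LowerSemicontinuous ψ

/-- H is a symmetric (self-adjoint) linear operator. -/
def SymmCLM {n : ℕ} (H : EuclideanSpace ℝ (Fin n) →L[ℝ] EuclideanSpace ℝ (Fin n)) : Prop :=
  ∀ u v, ⟪H u, v⟫ = ⟪u, H v⟫

/-- m is the smallest eigenvalue of the symmetric operator H
(characterized as the minimum of the Rayleigh quotient over the unit sphere). -/
def IsSmallestEigenvalue {n : ℕ} (H : EuclideanSpace ℝ (Fin n) →L[ℝ] EuclideanSpace ℝ (Fin n))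
    (m : ℝ) : Prop :=
  IsLeast {r : ℝ | ∃ u : EuclideanSpace ℝ (Fin n), ‖u‖ = 1 ∧ r = ⟪H u, u⟫} m

/-- The objective F = f + ψ (extended-real-valued). -/
def Fm {n : ℕ} (f : EuclideanSpace ℝ (Fin n) → ℝ) (ψ : EuclideanSpace ℝ (Fin n) → EReal)
    (x : EuclideanSpace ℝ (Fin n)) : EReal :=
  (f x : EReal) + ψ x

/-- The quadratic model Q(d) = ∇f(x)ᵀd + (1/2)dᵀHd + ψ(x+d) − ψ(x). -/
def Qm {n : ℕ} (f : EuclideanSpace ℝ (Fin n) → ℝ) (ψ : EuclideanSpace ℝ (Fin n) → EReal)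
    (H : EuclideanSpace ℝ (Fin n) →L[ℝ] EuclideanSpace ℝ (Fin n))
    (x d : EuclideanSpace ℝ (Fin n)) : EReal :=
  ((⟪gradient f x, d⟫ + 1 / 2 * ⟪H d, d⟫ : ℝ) : EReal) + ψ (x + d) - ψ x

/-- Δ(d) = ∇f(x)ᵀd + ψ(x+d) − ψ(x). -/
def Dm {n : ℕ} (f : EuclideanSpace ℝ (Fin n) → ℝ) (ψ : EuclideanSpace ℝ (Fin n) → EReal)
    (x d : EuclideanSpace ℝ (Fin n)) : EReal :=
  ((⟪gradient f x, d⟫ : ℝ) : EReal) + ψ (x + d) - ψ x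

/-- g is σ-strongly convex: g − (σ/2)‖·‖² is convex. -/
def StrongConvexE {n : ℕ} (σ : ℝ) (g : EuclideanSpace ℝ (Fin n) → EReal) : Prop :=
  ConvexE (fun d => g d - ((σ / 2 * ‖d‖ ^ 2 : ℝ) : EReal))

/-- The solution set Ω = argmin F. -/
def SolSet {n : ℕ} (f : EuclideanSpace ℝ (Fin n) → ℝ)
    (ψ : EuclideanSpace ℝ (Fin n) → EReal) : Set (EuclideanSpace ℝ (Fin n)) :=
  {y | ∀ z, Fm f ψ y ≤ Fm f ψ z}

/-- With ∇f L-Lipschitz and dᵀHd ≥ σ‖d‖² (σ > 0), if d satisfies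
Q(d) ≤ (1 − η)Q* for some η ∈ [0,1) and γ ∈ (0,1), then every step size
α ∈ (0, min{1, 2(1−γ)σ/(L(1+√η))}] satisfies the Armijo condition
F(x+αd) ≤ F(x) + αγΔ; in particular backtracking from α = 1 with factor β ∈ (0,1)
terminates with α ≥ min{1, 2β(1−γ)σ/(L(1+√η))}. -/
lemma deriv_along {n : ℕ} (f : EuclideanSpace ℝ (Fin n) → ℝ) (hf : Differentiable ℝ f)
    (x v : EuclideanSpace ℝ (Fin n)) (t : ℝ) :
    HasDerivAt (fun t : ℝ => f (x + t • v)) ⟪gradient f (x + t • v), v⟫ t := by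
  have h1 : HasDerivAt (fun t : ℝ => x + t • v) v t := by
    simpa using ((hasDerivAt_id t).smul_const v).const_add x
  have h2 := (hf (x + t • v)).hasGradientAt.hasFDerivAt
  simpa only [InnerProductSpace.toDual_apply_apply, Function.comp_def] using h2.comp_hasDerivAt t h1

lemma descent_lemma {n : ℕ} (f : EuclideanSpace ℝ (Fin n) → ℝ) (L : ℝ)
    (hf : Differentiable ℝ f)
    (hlip : ∀ y z, ‖gradient f y - gradient f z‖ ≤ L * ‖y - z‖)
    (x v : EuclideanSpace ℝ (Fin n)) :
    f (x + v) ≤ f x + ⟪gradient f x, v⟫ + L / 2 * ‖v‖ ^ 2 := by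
  set g : ℝ → ℝ := fun t => f (x + t • v) - t * ⟪gradient f x, v⟫ - L * t ^ 2 / 2 * ‖v‖ ^ 2
    with hg
  have hder : ∀ t : ℝ, HasDerivAt g
      (⟪gradient f (x + t • v), v⟫ - ⟪gradient f x, v⟫ - L * t * ‖v‖ ^ 2) t := by
    intro t
    have h1 := deriv_along f hf x v t
    have h2 : HasDerivAt (fun t : ℝ => t * ⟪gradient f x, v⟫) ⟪gradient f x, v⟫ t := by
      simpa using (hasDerivAt_id t).mul_const (⟪gradient f x, v⟫)
    have h3 : HasDerivAt (fun t : ℝ => L * t ^ 2 / 2 * ‖v‖ ^ 2) (L * t * ‖v‖ ^ 2) t := by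
      have := ((hasDerivAt_pow 2 t).const_mul L).div_const 2 |>.mul_const (‖v‖ ^ 2)
      exact this.congr_deriv (by rw [show (2:ℕ) - 1 = 1 from rfl]; push_cast; ring)
    exact (h1.sub h2).sub h3
  have hanti : AntitoneOn g (Icc (0 : ℝ) 1) := by
    apply antitoneOn_of_deriv_nonpos (convex_Icc 0 1)
    · exact fun t _ => ((hder t).continuousAt).continuousWithinAt
    · exact fun t _ => ((hder t).differentiableAt).differentiableWithinAt
    · intro t ht
      rw [interior_Icc] at ht
      rw [(hder t).deriv]
      have hb : ⟪gradient f (x + t • v) - gradient f x, v⟫ ≤ L * t * ‖v‖ ^ 2 := by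
        calc ⟪gradient f (x + t • v) - gradient f x, v⟫
            ≤ ‖gradient f (x + t • v) - gradient f x‖ * ‖v‖ := real_inner_le_norm _ _
          _ ≤ (L * ‖(x + t • v) - x‖) * ‖v‖ :=
              mul_le_mul_of_nonneg_right (hlip _ _) (norm_nonneg v)
          _ = L * t * ‖v‖ ^ 2 := by
              rw [add_sub_cancel_left, norm_smul, Real.norm_eq_abs, abs_of_pos ht.1]; ring
      rw [inner_sub_left] at hb
      linarith
  have h01 := hanti (by constructor <;> norm_num) (by constructor <;> norm_num) zero_le_one
  simp only [hg, one_smul, one_pow, zero_smul, add_zero, zero_pow, mul_zero, zero_mul,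
    sub_zero, mul_one] at h01
  nlinarith [h01]

lemma key_delta (Δ hh η : ℝ) (hη0 : 0 ≤ η) (hhh : 0 ≤ hh)
    (key : ∀ t : ℝ, 0 ≤ t → t ≤ 1 → Δ + hh / 2 ≤ (1 - η) * (t * Δ + t ^ 2 * hh / 2)) :
    Δ * (1 + Real.sqrt η) ≤ -hh := by
  set s := Real.sqrt η with hs
  have hs2 : s ^ 2 = η := Real.sq_sqrt hη0
  have hs0 : 0 ≤ s := Real.sqrt_nonneg η
  rcases eq_or_lt_of_le hs0 with h0 | hspos
  · have hη : η = 0 := by rw [← hs2, ← h0]; ring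
    rw [← h0]
    by_contra hc
    push_neg at hc
    have hε0 : 0 < Δ + hh := by nlinarith
    set ε := Δ + hh with hε
    have h0' := key 0 le_rfl zero_le_one
    rw [hη] at h0'
    simp at h0'
    have hhh' : 0 < hh := by nlinarith
    have hu0 : 0 < ε / hh := div_pos hε0 hhh'
    have hu1 : ε / hh ≤ 1 / 2 := by rw [div_le_div_iff₀ hhh' (by norm_num)]; nlinarith
    have hk := key (1 - ε / hh) (by linarith) (by linarith)
    rw [hη] at hk
    have hcan : hh * (ε / hh) = ε := mul_div_cancel₀ _ (ne_of_gt hhh')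
    nlinarith [hk, hcan, mul_pos hu0 hε0, sq_nonneg (ε / hh)]
  · have h1s : (0:ℝ) < 1 + s := by linarith
    have hk := key (1 / (1 + s)) (by positivity) (by rw [div_le_one h1s]; linarith)
    rw [← hs2] at hk
    have hk2 := mul_le_mul_of_nonneg_left hk (le_of_lt (mul_pos h1s h1s))
    have e1 : (1 + s) * (1 + s) * ((1 - s ^ 2) * (1 / (1 + s) * Δ + (1 / (1 + s)) ^ 2 * hh / 2))
        = (1 - s) * ((1 + s) * ((1 + s) * Δ)) + (1 - s ^ 2) * hh / 2 := by
      field_simp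
      ring
    rw [e1] at hk2
    nlinarith [hk2, mul_pos hspos h1s]

theorem armijo_line_search_bound_posdef {n : ℕ}
    (f : EuclideanSpace ℝ (Fin n) → ℝ) (ψ : EuclideanSpace ℝ (Fin n) → EReal)
    (H : EuclideanSpace ℝ (Fin n) →L[ℝ] EuclideanSpace ℝ (Fin n))
    (x d : EuclideanSpace ℝ (Fin n)) (L σ η γ : ℝ)
    (hf : Differentiable ℝ f) (hL : 0 < L)
    (hlip : ∀ y z, ‖gradient f y - gradient f z‖ ≤ L * ‖y - z‖)
    (hψconv : ConvexE ψ) (hψproper : ProperPsi ψ) (hψclosed : ClosedPsi ψ)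
    (hdom : ψ x ≠ ⊤)
    (hH : SymmCLM H)
    (hσ : 0 < σ) (hσH : ∀ e : EuclideanSpace ℝ (Fin n), σ * ‖e‖ ^ 2 ≤ ⟪H e, e⟫)
    (hη0 : 0 ≤ η) (hη1 : η < 1)
    (happrox : Qm f ψ H x d ≤ ((1 - η : ℝ) : EReal) * ⨅ e, Qm f ψ H x e)
    (hγ0 : 0 < γ) (hγ1 : γ < 1) :
    (∀ α : ℝ, 0 < α → α ≤ min 1 (2 * (1 - γ) * σ / (L * (1 + Real.sqrt η))) →
        Fm f ψ (x + α • d) ≤ Fm f ψ x + ((α * γ : ℝ) : EReal) * Dm f ψ x d) ∧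
      ∀ β : ℝ, 0 < β → β < 1 →
        ∃ i : ℕ,
          IsLeast {j : ℕ |
              Fm f ψ (x + β ^ j • d) ≤ Fm f ψ x + ((β ^ j * γ : ℝ) : EReal) * Dm f ψ x d} i ∧
            min 1 (2 * β * (1 - γ) * σ / (L * (1 + Real.sqrt η))) ≤ β ^ i := by
  classical
  have hs0 : 0 ≤ Real.sqrt η := Real.sqrt_nonneg η
  have h1s : (0:ℝ) < 1 + Real.sqrt η := by linarith
  obtain ⟨p0, hp0⟩ : ∃ r : ℝ, ψ x = (r : EReal) := by
    lift ψ x to ℝ using ⟨hdom, hψproper.1 x⟩ with p0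
    exact ⟨p0, rfl⟩
  set A := (⟪gradient f x, d⟫ : ℝ) with hA
  set hh := (⟪H d, d⟫ : ℝ) with hhdef
  have hh0 : 0 ≤ hh := le_trans (by positivity) (hσH d)
  -- Q at 0 is 0
  have hQ0 : Qm f ψ H x 0 = 0 := by
    simp only [Qm, inner_zero_right, map_zero, mul_zero, add_zero, hp0]
    norm_num
  have hQs_le : (⨅ e, Qm f ψ H x e) ≤ 0 := hQ0 ▸ iInf_le _ 0
  have hmulle : ((1 - η : ℝ) : EReal) * (⨅ e, Qm f ψ H x e) ≤ 0 := by
    rcases eq_or_ne (⨅ e, Qm f ψ H x e) ⊥ with hb | hb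
    · rw [hb, EReal.coe_mul_bot_of_pos (by linarith : (0:ℝ) < 1 - η)]
      exact bot_le
    · have htop : (⨅ e, Qm f ψ H x e) ≠ ⊤ := ne_top_of_le_ne_top EReal.zero_ne_top hQs_le
      obtain ⟨q, hq⟩ : ∃ q : ℝ, (⨅ e, Qm f ψ H x e) = (q : EReal) := by
        lift (⨅ e, Qm f ψ H x e) to ℝ using ⟨htop, hb⟩ with q
        exact ⟨q, rfl⟩
      rw [hq] at hQs_le ⊢
      have hq0 : q ≤ 0 := by exact_mod_cast hQs_le
      rw [← EReal.coe_mul]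
      have : (1 - η) * q ≤ 0 := by nlinarith
      exact_mod_cast this
  have hQd_le : Qm f ψ H x d ≤ 0 := le_trans happrox hmulle
  have hp1top : ψ (x + d) ≠ ⊤ := by
    intro htop
    rw [Qm, htop, hp0, EReal.coe_add_top, EReal.top_sub_coe] at hQd_le
    simp at hQd_le
  obtain ⟨p1, hp1⟩ : ∃ r : ℝ, ψ (x + d) = (r : EReal) := by
    lift ψ (x + d) to ℝ using ⟨hp1top, hψproper.1 _⟩ with p1
    exact ⟨p1, rfl⟩
  have hQd_eq : Qm f ψ H x d = ((A + 1 / 2 * hh + p1 - p0 : ℝ) : EReal) := by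
    rw [Qm, hp0, hp1]
    norm_cast
  have hbot : (⨅ e, Qm f ψ H x e) ≠ ⊥ := by
    intro hb
    rw [hb, EReal.coe_mul_bot_of_pos (by linarith : (0:ℝ) < 1 - η), hQd_eq] at happrox
    exact EReal.coe_ne_bot _ (le_bot_iff.mp happrox)
  have htop : (⨅ e, Qm f ψ H x e) ≠ ⊤ := ne_top_of_le_ne_top EReal.zero_ne_top hQs_le
  obtain ⟨q, hq⟩ : ∃ q : ℝ, (⨅ e, Qm f ψ H x e) = (q : EReal) := by
    lift (⨅ e, Qm f ψ H x e) to ℝ using ⟨htop, hbot⟩ with q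
    exact ⟨q, rfl⟩
  have happ : A + 1 / 2 * hh + p1 - p0 ≤ (1 - η) * q := by
    rw [hQd_eq, hq, ← EReal.coe_mul] at happrox
    exact_mod_cast happrox
  -- convexity bound for ψ along the segment
  have hconv : ∀ t : ℝ, 0 ≤ t → t ≤ 1 →
      ψ (x + t • d) ≤ (((1 - t) * p0 + t * p1 : ℝ) : EReal) := by
    intro t ht0 ht1
    have hcomb : (1 - t) • x + t • (x + d) = x + t • d := by module
    have hcv := hψconv x (x + d) (1 - t) t (by linarith) ht0 (by ring)
    rw [hcomb, hp0, hp1] at hcv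
    calc ψ (x + t • d) ≤ ((1 - t : ℝ) : EReal) * (p0 : EReal) + (t : EReal) * (p1 : EReal) := hcv
      _ = (((1 - t) * p0 + t * p1 : ℝ) : EReal) := by norm_cast
  -- the inf bound along the segment, in ℝ
  have hqt : ∀ t : ℝ, 0 ≤ t → t ≤ 1 →
      q ≤ t * A + t ^ 2 * hh / 2 + (1 - t) * p0 + t * p1 - p0 := by
    intro t ht0 ht1
    have h1 : (q : EReal) ≤ Qm f ψ H x (t • d) := hq ▸ iInf_le _ _
    have hin : (⟪gradient f x, t • d⟫ : ℝ) = t * A := real_inner_smul_right _ _ _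
    have hin2 : (⟪H (t • d), t • d⟫ : ℝ) = t ^ 2 * hh := by
      rw [map_smul, real_inner_smul_left, real_inner_smul_right, hhdef]; ring
    have h2 : Qm f ψ H x (t • d)
        ≤ ((t * A + 1 / 2 * (t ^ 2 * hh) + ((1 - t) * p0 + t * p1) - p0 : ℝ) : EReal) := by
      rw [Qm, hp0, hin, hin2]
      calc ((t * A + 1 / 2 * (t ^ 2 * hh) : ℝ) : EReal) + ψ (x + t • d) - (p0 : EReal)
          ≤ ((t * A + 1 / 2 * (t ^ 2 * hh) : ℝ) : EReal)
              + (((1 - t) * p0 + t * p1 : ℝ) : EReal) - (p0 : EReal) := by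
            exact add_le_add_left (add_le_add_right (hconv t ht0 ht1) _) _
        _ = _ := by norm_cast
    have h3 := le_trans h1 h2
    have h4 : q ≤ t * A + 1 / 2 * (t ^ 2 * hh) + ((1 - t) * p0 + t * p1) - p0 := by
      exact_mod_cast h3
    linarith
  -- the key quadratic inequality
  have keyD : ∀ t : ℝ, 0 ≤ t → t ≤ 1 →
      (A + p1 - p0) + hh / 2 ≤ (1 - η) * (t * (A + p1 - p0) + t ^ 2 * hh / 2) := by
    intro t ht0 ht1
    have h1 := hqt t ht0 ht1
    have h2 : (1 - η) * q ≤ (1 - η) * (t * A + t ^ 2 * hh / 2 + (1 - t) * p0 + t * p1 - p0) :=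
      mul_le_mul_of_nonneg_left h1 (by linarith)
    have h3 : (1 - η) * (t * A + t ^ 2 * hh / 2 + (1 - t) * p0 + t * p1 - p0)
        = (1 - η) * (t * (A + p1 - p0) + t ^ 2 * hh / 2) := by ring
    rw [h3] at h2
    linarith
  have hkey : (A + p1 - p0) * (1 + Real.sqrt η) ≤ -hh :=
    key_delta (A + p1 - p0) hh η hη0 hh0 keyD
  have hDm : Dm f ψ x d = ((A + p1 - p0 : ℝ) : EReal) := by
    rw [Dm, hp0, hp1]
    norm_cast
  -- main Armijo claim
  have main : ∀ α : ℝ, 0 < α → α ≤ min 1 (2 * (1 - γ) * σ / (L * (1 + Real.sqrt η))) →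
      Fm f ψ (x + α • d) ≤ Fm f ψ x + ((α * γ : ℝ) : EReal) * Dm f ψ x d := by
    intro α hα0 hαle
    have hα1 : α ≤ 1 := le_trans hαle (min_le_left _ _)
    have hαc : α ≤ 2 * (1 - γ) * σ / (L * (1 + Real.sqrt η)) :=
      le_trans hαle (min_le_right _ _)
    have hαc' : α * (L * (1 + Real.sqrt η)) ≤ 2 * (1 - γ) * σ := by
      rwa [← le_div_iff₀ (by positivity)]
    have hfb := descent_lemma f L hf hlip x (α • d)
    rw [real_inner_smul_right, ← hA] at hfb
    have hnrm : ‖α • d‖ ^ 2 = α ^ 2 * ‖d‖ ^ 2 := by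
      rw [norm_smul, mul_pow, Real.norm_eq_abs, sq_abs]
    rw [hnrm] at hfb
    have hψb := hconv α hα0.le hα1
    have hd2 : σ * ‖d‖ ^ 2 ≤ hh := hσH d
    have h2 : (0:ℝ) ≤ ‖d‖ ^ 2 := sq_nonneg _
    have hreal : f (x + α • d) + ((1 - α) * p0 + α * p1)
        ≤ (f x + p0) + α * γ * (A + p1 - p0) := by
      set Fa := f (x + α • d) with hFa
      set F0 := f x with hF0
      set D2 := ‖d‖ ^ 2 with hD2
      clear_value Fa F0 D2
      have hA1 : (A + p1 - p0) * (1 + Real.sqrt η) ≤ -(σ * D2) :=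
        hkey.trans (by linarith [hd2])
      have h3 : (1 - γ) * ((A + p1 - p0) * (1 + Real.sqrt η)) ≤ (1 - γ) * (-(σ * D2)) :=
        mul_le_mul_of_nonneg_left hA1 (by linarith)
      have h4 : α * (L * (1 + Real.sqrt η)) * D2 ≤ 2 * (1 - γ) * σ * D2 :=
        mul_le_mul_of_nonneg_right hαc' h2
      have h5 := mul_le_mul_of_nonneg_left h3 hα0.le
      have h6 := mul_le_mul_of_nonneg_left h4 hα0.le
      have h7 : (α * ((1 - γ) * (A + p1 - p0)) + α * (L * α * D2 / 2)) * (1 + Real.sqrt η)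
          ≤ 0 * (1 + Real.sqrt η) := by linarith [h5, h6]
      have h8 : α * ((1 - γ) * (A + p1 - p0)) + α * (L * α * D2 / 2) ≤ 0 :=
        le_of_mul_le_mul_right h7 h1s
      linarith [hfb, h8]
    calc Fm f ψ (x + α • d) = ((f (x + α • d) : ℝ) : EReal) + ψ (x + α • d) := by rw [Fm]
      _ ≤ ((f (x + α • d) : ℝ) : EReal) + (((1 - α) * p0 + α * p1 : ℝ) : EReal) :=
          add_le_add_right hψb _
      _ = ((f (x + α • d) + ((1 - α) * p0 + α * p1) : ℝ) : EReal) := by norm_cast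
      _ ≤ (((f x + p0) + α * γ * (A + p1 - p0) : ℝ) : EReal) := by exact_mod_cast hreal
      _ = Fm f ψ x + ((α * γ : ℝ) : EReal) * Dm f ψ x d := by
          rw [hDm, Fm, hp0]
          norm_cast
  refine ⟨main, ?_⟩
  intro β hβ0 hβ1
  set c := 2 * (1 - γ) * σ / (L * (1 + Real.sqrt η)) with hc
  have hc0 : 0 < c := by
    apply div_pos (by nlinarith) (by positivity)
  have hmin0 : 0 < min 1 c := lt_min one_pos hc0
  obtain ⟨j, hj⟩ := exists_pow_lt_of_lt_one hmin0 hβ1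
  set S := {j : ℕ |
      Fm f ψ (x + β ^ j • d) ≤ Fm f ψ x + ((β ^ j * γ : ℝ) : EReal) * Dm f ψ x d} with hS
  have hjS : j ∈ S := main _ (pow_pos hβ0 j) hj.le
  have hSne : S.Nonempty := ⟨j, hjS⟩
  refine ⟨sInf S, ⟨Nat.sInf_mem hSne, fun k hk => Nat.sInf_le hk⟩, ?_⟩
  rcases Nat.eq_zero_or_pos (sInf S) with h0 | hpos
  · rw [h0, pow_zero]
    exact min_le_left _ _
  · obtain ⟨k, hk⟩ : ∃ k, sInf S = k + 1 := ⟨sInf S - 1, (Nat.succ_pred_eq_of_pos hpos).symm⟩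
    have hknot : k ∉ S := Nat.notMem_of_lt_sInf (by omega)
    have hlt : min 1 c < β ^ k := by
      by_contra hcon
      push_neg at hcon
      exact hknot (main _ (pow_pos hβ0 k) hcon)
    have hβk1 : β ^ k ≤ 1 := pow_le_one₀ hβ0.le hβ1.le
    have hc1 : c < 1 := by
      by_contra hcon
      push_neg at hcon
      rw [min_eq_left hcon] at hlt
      linarith
    have hclt : c < β ^ k := by rwa [min_eq_right hc1.le] at hlt
    rw [hk]
    calc min 1 (2 * β * (1 - γ) * σ / (L * (1 + Real.sqrt η)))
        ≤ 2 * β * (1 - γ) * σ / (L * (1 + Real.sqrt η)) := min_le_right _ _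
      _ = β * c := by rw [hc]; ring
      _ ≤ β ^ (k + 1) := by rw [pow_succ]; nlinarith
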